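/- Let X ⊂ ℝ² be finite with centroid M, 2-centroids M_j, and let x_r be a point of X farthest from M. If M_r lies in the farthest-point Voronoi cell of x_r (i.e., ‖M_r - x_r‖ ≥ ‖M_r - x_i‖ for all i), then M_r is the unique minimiser of P(s) = Σ_i ‖s-x_i‖² + max_i ‖s-x_i‖². -/

import Mathlib

/-- If the 2-centroid `M_r` of a point `x_r` farthest from the centroid lies in the
farthest-point Voronoi cell of `x_r`, then `M_r` is the unique quadratic min-power centre. -/
theorem Mr_in_voronoi_implies_optimal
    {n : ℕ} [NeZero n] (x : Fin n → EuclideanSpace ℝ (Fin 2))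
    (M : EuclideanSpace ℝ (Fin 2)) (hM : M = (n : ℝ)⁻¹ • ∑ i, x i)
    (r : Fin n) (hr : ∀ i, ‖M - x i‖ ≤ ‖M - x r‖)
    (Mr : EuclideanSpace ℝ (Fin 2)) (hMr : Mr = ((n : ℝ) + 1)⁻¹ • (x r + ∑ i, x i))
    (hvor : ∀ i, ‖Mr - x i‖ ≤ ‖Mr - x r‖)
    (P : EuclideanSpace ℝ (Fin 2) → ℝ)
    (hP : ∀ s, P s = (∑ i, ‖s - x i‖ ^ 2) +
      Finset.univ.sup' Finset.univ_nonempty (fun i => ‖s - x i‖ ^ 2)) :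
    (∀ t, P Mr ≤ P t) ∧ (∀ s, (∀ t, P s ≤ P t) → s = Mr) := by
  have hn1 : ((n : ℝ) + 1) ≠ 0 := by positivity
  have hn1pos : (0 : ℝ) < (n : ℝ) + 1 := by positivity
  have hMr' : ((n : ℝ) + 1) • Mr = x r + ∑ i, x i := by
    rw [hMr, smul_smul, mul_inv_cancel₀ hn1, one_smul]
  have hzero : (∑ i, (Mr - x i)) + (Mr - x r) = 0 := by
    have h1 : (∑ i, (Mr - x i)) + (Mr - x r)
        = ((n : ℝ) + 1) • Mr - (x r + ∑ i, x i) := by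
      rw [Finset.sum_sub_distrib, Finset.sum_const, Finset.card_univ, Fintype.card_fin,
        add_smul, one_smul, ← Nat.cast_smul_eq_nsmul ℝ]
      abel
    rw [h1, hMr', sub_self]
  -- parallel axis identity
  have key : ∀ t : EuclideanSpace ℝ (Fin 2),
      (∑ i, ‖t - x i‖ ^ 2) + ‖t - x r‖ ^ 2
        = ((∑ i, ‖Mr - x i‖ ^ 2) + ‖Mr - x r‖ ^ 2) + ((n : ℝ) + 1) * ‖t - Mr‖ ^ 2 := by
    intro t
    have expand : ∀ y : EuclideanSpace ℝ (Fin 2),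
        ‖t - y‖ ^ 2
          = ‖t - Mr‖ ^ 2 + 2 * (inner ℝ (t - Mr) (Mr - y) : ℝ) + ‖Mr - y‖ ^ 2 := by
      intro y
      have h : t - y = (t - Mr) + (Mr - y) := by abel
      rw [h, norm_add_sq_real]
    have hsum : (∑ i, ‖t - x i‖ ^ 2)
        = (n : ℝ) * ‖t - Mr‖ ^ 2
          + 2 * (inner ℝ (t - Mr) (∑ i, (Mr - x i)) : ℝ)
          + ∑ i, ‖Mr - x i‖ ^ 2 := by
      rw [Finset.sum_congr rfl (fun i _ => expand (x i)), Finset.sum_add_distrib,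
        Finset.sum_add_distrib, ← Finset.mul_sum, ← inner_sum, Finset.sum_const,
        Finset.card_univ, Fintype.card_fin, nsmul_eq_mul]
    have hinner : (inner ℝ (t - Mr) (∑ i, (Mr - x i)) : ℝ)
        + (inner ℝ (t - Mr) (Mr - x r) : ℝ) = 0 := by
      rw [← inner_add_right, hzero, inner_zero_right]
    rw [hsum, expand (x r)]
    nlinarith [hinner]
  -- the sup at Mr equals the r-term
  have hsupMr : Finset.univ.sup' Finset.univ_nonempty (fun i => ‖Mr - x i‖ ^ 2)
      = ‖Mr - x r‖ ^ 2 := by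
    apply le_antisymm
    · apply Finset.sup'_le
      intro i _
      exact pow_le_pow_left₀ (norm_nonneg _) (hvor i) 2
    · exact Finset.le_sup' (fun i => ‖Mr - x i‖ ^ 2) (Finset.mem_univ r)
  have hlow : ∀ t, P Mr + ((n : ℝ) + 1) * ‖t - Mr‖ ^ 2 ≤ P t := by
    intro t
    have h1 : ‖t - x r‖ ^ 2
        ≤ Finset.univ.sup' Finset.univ_nonempty (fun i => ‖t - x i‖ ^ 2) :=
      Finset.le_sup' (fun i => ‖t - x i‖ ^ 2) (Finset.mem_univ r)
    have h2 := key t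
    rw [hP t, hP Mr, hsupMr]
    linarith
  constructor
  · intro t
    have := hlow t
    nlinarith [sq_nonneg ‖t - Mr‖, hn1pos.le]
  · intro s hs
    have h1 := hlow s
    have h2 := hs Mr
    have h3 : ((n : ℝ) + 1) * ‖s - Mr‖ ^ 2 ≤ 0 := by linarith
    have h4 : ‖s - Mr‖ ^ 2 ≤ 0 := by
      by_contra h
      push_neg at h
      nlinarith
    have h5 : ‖s - Mr‖ = 0 := by
      have := sq_nonneg ‖s - Mr‖
      have : ‖s - Mr‖ ^ 2 = 0 := le_antisymm h4 this
      exact pow_eq_zero_iff (by norm_num) |>.mp this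
    have : s - Mr = 0 := norm_eq_zero.mp h5
    exact sub_eq_zero.mp this
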